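/- arXiv:1106.4811 — 2 statements merged into one kernel-verified Lean document; each statement's English description precedes it below -/
import Mathlib

section
/- Let Ω ⊆ ℝⁿ, let Q(x) be a real n×n matrix-valued function on Ω which is symmetric and positive semidefinite for almost every x ∈ Ω, and let T(x) = (t₁(x),…,tₙ(x)) be a vector field on Ω which is subunit with respect to Q(x), i.e., (Σᵢ tᵢ(x)ξᵢ)² ≤ ⟨Q(x)ξ,ξ⟩ for almost every x ∈ Ω and all ξ ∈ ℝⁿ. Then there exists a vector-valued function V(x) on Ω such that for almost every x ∈ Ω: (1) T(x) = √(Q(x))·V(x), and (2) |V(x)| ≤ 1. -/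
open Matrix MeasureTheory
open scoped RealInnerProductSpace

/-- The Euclidean norm of a vector in `ℝⁿ`, written via the dot product. -/
noncomputable def euclNorm {n : ℕ} (x : Fin n → ℝ) : ℝ := Real.sqrt (x ⬝ᵥ x)

/-- The square root of a positive semidefinite matrix, as `Matrix.PosSemidef.sqrt` was defined
in the older Mathlib (removed since). -/
noncomputable def Matrix.PosSemidef.sqrt {m : Type*} [Fintype m]
    [DecidableEq m] {A : Matrix m m ℝ} (hA : A.PosSemidef) : Matrix m m ℝ :=
  hA.1.eigenvectorUnitary.1 * diagonal (Real.sqrt ∘ hA.1.eigenvalues) *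
    (star hA.1.eigenvectorUnitary : Matrix m m ℝ)

lemma psd_sqrt_isHermitian {m : Type*} [Fintype m] [DecidableEq m] {A : Matrix m m ℝ}
    (hA : A.PosSemidef) : hA.sqrt.IsHermitian := by
  unfold Matrix.PosSemidef.sqrt
  have := isHermitian_mul_mul_conjTranspose (hA.1.eigenvectorUnitary.1)
    (isHermitian_diagonal (Real.sqrt ∘ hA.1.eigenvalues))
  simpa [Matrix.star_eq_conjTranspose] using this

lemma psd_sqrt_mul_self {m : Type*} [Fintype m] [DecidableEq m] {A : Matrix m m ℝ}
    (hA : A.PosSemidef) : hA.sqrt * hA.sqrt = A := by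
  unfold Matrix.PosSemidef.sqrt
  set U : Matrix m m ℝ := hA.1.eigenvectorUnitary.1 with hU
  have hUU : (star hA.1.eigenvectorUnitary : Matrix m m ℝ) * U = 1 :=
    Unitary.coe_star_mul_self _
  have hDD : diagonal (Real.sqrt ∘ hA.1.eigenvalues) * diagonal (Real.sqrt ∘ hA.1.eigenvalues)
      = diagonal (RCLike.ofReal ∘ hA.1.eigenvalues) := by
    rw [diagonal_mul_diagonal]
    congr 1
    funext i
    simp [Real.mul_self_sqrt (hA.eigenvalues_nonneg i)]
  conv_rhs => rw [hA.1.spectral_theorem, Unitary.conjStarAlgAut_apply]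
  rw [← hDD]
  calc U * diagonal (Real.sqrt ∘ hA.1.eigenvalues) * (star hA.1.eigenvectorUnitary : Matrix m m ℝ) *
        (U * diagonal (Real.sqrt ∘ hA.1.eigenvalues) * (star hA.1.eigenvectorUnitary : Matrix m m ℝ))
      = U * diagonal (Real.sqrt ∘ hA.1.eigenvalues) * ((star hA.1.eigenvectorUnitary : Matrix m m ℝ) *
        U) * diagonal (Real.sqrt ∘ hA.1.eigenvalues) * (star hA.1.eigenvectorUnitary : Matrix m m ℝ) := by
        simp only [Matrix.mul_assoc]
    _ = _ := by rw [hUU, Matrix.mul_one]; simp only [Matrix.mul_assoc]; rfl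

lemma key {n : ℕ} {Q : Matrix (Fin n) (Fin n) ℝ} (hQ : Q.PosSemidef) {T : Fin n → ℝ}
    (hs : ∀ ξ : Fin n → ℝ, (T ⬝ᵥ ξ) ^ 2 ≤ Q.mulVec ξ ⬝ᵥ ξ) :
    ∃ v : Fin n → ℝ, T = hQ.sqrt.mulVec v ∧ euclNorm v ≤ 1 := by
  classical
  set S := hQ.sqrt with hSdef
  have hSS : S * S = Q := psd_sqrt_mul_self hQ
  set E := EuclideanSpace ℝ (Fin n)
  let e : E ≃ (Fin n → ℝ) := WithLp.equiv 2 (Fin n → ℝ)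
  let A : E →ₗ[ℝ] E := Matrix.toEuclideanLin S
  have hAsymm : A.IsSymmetric :=
    Matrix.isHermitian_iff_isSymmetric.mp (psd_sqrt_isHermitian hQ)
  have hinner : ∀ x y : E, ⟪x, y⟫ = (e x) ⬝ᵥ (e y) := by
    intro x y; rw [dotProduct_comm]; rfl
  have hA_apply : ∀ x : E, e (A x) = S.mulVec (e x) := by
    intro x; exact Matrix.ofLp_toEuclideanLin_apply S x
  -- (range A)ᗮ = ker A
  have h1 : (LinearMap.range A)ᗮ = LinearMap.ker A := by
    ext x
    simp only [Submodule.mem_orthogonal, LinearMap.mem_ker]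
    constructor
    · intro h
      have := h (A (A x)) (LinearMap.mem_range_self A (A x))
      rw [hAsymm (A x) x] at this
      exact inner_self_eq_zero.mp this
    · intro h u hu
      obtain ⟨y, rfl⟩ := hu
      rw [real_inner_comm, ← hAsymm x y, h, inner_zero_left]
  have h2 : (LinearMap.ker A)ᗮ = LinearMap.range A := by
    rw [← h1, Submodule.orthogonal_orthogonal]
  -- T is orthogonal to ker A
  set T' : E := e.symm T with hT'def
  have hT'mem : T' ∈ (LinearMap.ker A)ᗮ := by
    intro u hu
    have hu' : S.mulVec (e u) = 0 := by
      have := congrArg e hu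
      rw [hA_apply] at this
      exact this.trans rfl
    have hQu : Q.mulVec (e u) ⬝ᵥ (e u) = 0 := by
      rw [← hSS, ← Matrix.mulVec_mulVec, hu']
      simp
    have := hs (e u)
    rw [hQu] at this
    have hT0 : T ⬝ᵥ (e u) = 0 := by nlinarith [sq_nonneg (T ⬝ᵥ e u)]
    rw [hinner u T']
    have : e T' = T := by simp [hT'def]
    rw [this, dotProduct_comm, hT0]
  rw [h2] at hT'mem
  obtain ⟨w, hw⟩ := hT'mem
  -- project w onto range A
  set K := LinearMap.range A
  have : K.HasOrthogonalProjection := inferInstance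
  set v' : E := (Submodule.orthogonalProjection K w : E) with hv'def
  have hv'mem : v' ∈ K := (Submodule.orthogonalProjection K w).2
  have hdiff : w - v' ∈ LinearMap.ker A := by
    rw [← h1]; exact Submodule.sub_starProjection_mem_orthogonal (K := K) w
  have hAv' : A v' = T' := by
    have h0 : A (w - v') = 0 := hdiff
    rw [map_sub] at h0
    rw [← sub_eq_zero.mp h0, hw]
  obtain ⟨u, hu⟩ := hv'mem
  -- norm bound
  have hnorm : ⟪v', v'⟫ ≤ 1 := by
    have hvv : ⟪v', v'⟫ = Q.mulVec (e u) ⬝ᵥ (e u) := by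
      rw [← hu, hAsymm u (A u), hinner, hA_apply, hA_apply,
        Matrix.mulVec_mulVec, hSS, dotProduct_comm]
    have hTu : T ⬝ᵥ (e u) = ⟪v', v'⟫ := by
      have h3 : ⟪T', u⟫ = ⟪v', v'⟫ := by rw [← hAv', hAsymm v' u, hu]
      have h4 : ⟪T', u⟫ = T ⬝ᵥ (e u) := by rw [hinner]; simp [hT'def]
      rw [← h4, h3]
    have := hs (e u)
    rw [hTu, ← hvv] at this
    nlinarith [real_inner_self_nonneg (x := v')]
  refine ⟨e v', ?_, ?_⟩
  · have := congrArg e hAv'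
    rw [hA_apply] at this
    simpa [hT'def, hSdef] using this.symm
  · rw [euclNorm, ← hinner]
    have h0 : (0:ℝ) ≤ ⟪v', v'⟫ := real_inner_self_nonneg
    calc Real.sqrt ⟪v', v'⟫ ≤ Real.sqrt 1 := Real.sqrt_le_sqrt hnorm
    _ = 1 := Real.sqrt_one

/-- If `Q x` is symmetric positive semidefinite for a.e. `x ∈ Ω` and the
vector field `T` is subunit with respect to `Q`, i.e. `(T(x)·ξ)² ≤ ⟨Q(x)ξ,ξ⟩` for a.e. `x`
and all `ξ`, then there is a vector-valued function `V` with `T(x) = √(Q(x))·V(x)` and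
`|V(x)| ≤ 1` for a.e. `x ∈ Ω`. -/
theorem stmt10 {n : ℕ} (Ω : Set (Fin n → ℝ)) (hΩ : MeasurableSet Ω)
    (Q : (Fin n → ℝ) → Matrix (Fin n) (Fin n) ℝ) (T : (Fin n → ℝ) → (Fin n → ℝ))
    (hae : ∀ᵐ x ∂(volume.restrict Ω),
      (Q x).PosSemidef ∧ ∀ ξ : Fin n → ℝ, (T x ⬝ᵥ ξ) ^ 2 ≤ (Q x).mulVec ξ ⬝ᵥ ξ) :
    ∃ V : (Fin n → ℝ) → (Fin n → ℝ),
      ∀ᵐ x ∂(volume.restrict Ω), ∀ hQx : (Q x).PosSemidef,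
        T x = hQx.sqrt.mulVec (V x) ∧ euclNorm (V x) ≤ 1 := by
  classical
  refine ⟨fun x =>
    if h : (Q x).PosSemidef ∧ ∀ ξ : Fin n → ℝ, (T x ⬝ᵥ ξ) ^ 2 ≤ (Q x).mulVec ξ ⬝ᵥ ξ
    then (key h.1 h.2).choose else 0, ?_⟩
  filter_upwards [hae] with x hx
  intro hQx
  rw [dif_pos hx]
  obtain ⟨h1, h2⟩ := (key hx.1 hx.2).choose_spec
  exact ⟨h1, h2⟩
end

section
/- Let Ω ⊆ ℝⁿ be open, 1 < p < ∞, σ > 1, and let Q : Ω → ℝ^{n×n} be a measurable matrix-valued function with Q(x) symmetric and positive semidefinite for almost every x ∈ Ω. Let B ⊆ Ω be a bounded measurable set with |B| > 0, let S ⊆ B, and let r > 0. Assume: (i) there is C₁ > 0 such that for every Lipschitz function v : ℝⁿ → ℝ with compact support contained in B, ((1/|B|)∫_B |v|^{pσ} dx)^{1/(pσ)} ≤ C₁ [ r((1/|B|)∫_B |√(Q(x))·∇v(x)|^p dx)^{1/p} + ((1/|B|)∫_B |v|^p dx)^{1/p} ]; (ii) there exist t ∈ (1,∞) and a Lipschitz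 function η with compact support contained in B such that 0 ≤ η ≤ 1, η = 1 on S, and ∫_B |√(Q(x))·∇η(x)|^{pt} dx < ∞; (iii) with t′ = t/(t−1), there is c₂ > 0 such that for every locally Lipschitz f : Ω → ℝ, (∫_B |f|^{pt′} dx)^{1/(pt′)} ≤ c₂ (∫_Ω |√(Q(x))·∇f(x)|^p dx + ∫_Ω |f|^p dx)^{1/p}. Then there exists a constant C > 0, independent of w, such that every locally Lipschitz function w : Ω → ℝ satisfies (∫_S |w|^{pσ} dx)^{1/(pσ)} ≤ C (∫_Ω |√(Q(x))·∇w(x)|^p dx + ∫_Ω |w|^p dx)^{1/p}. -/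
open Matrix MeasureTheory Set
open scoped ENNReal NNReal

/-- The (a.e.-defined) gradient of `v : ℝⁿ → ℝ`, given by the directional derivatives of `v`
along the standard basis vectors (Lipschitz functions are differentiable a.e. by
Rademacher's theorem; `fderiv` is `0` where `v` is not differentiable). -/
noncomputable def grad {n : ℕ} (v : (Fin n → ℝ) → ℝ) (x : Fin n → ℝ) : Fin n → ℝ :=
  fun i => fderiv ℝ v x (Pi.single i 1)

/-- `|√(Q(x))·∇v(x)| = ⟨Q(x)∇v(x), ∇v(x)⟩^{1/2}`, the degenerate length of the gradient. -/
noncomputable def sqQnormGrad {n : ℕ} (Q : (Fin n → ℝ) → Matrix (Fin n) (Fin n) ℝ)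
    (v : (Fin n → ℝ) → ℝ) (x : Fin n → ℝ) : ℝ :=
  Real.sqrt ((Q x).mulVec (grad v x) ⬝ᵥ grad v x)

/-- `f` is locally Lipschitz on `Ω`. -/
def LocLipschitzOn {n : ℕ} (Ω : Set (Fin n → ℝ)) (f : (Fin n → ℝ) → ℝ) : Prop :=
  ∀ x ∈ Ω, ∃ K : NNReal, ∃ s ∈ nhdsWithin x Ω, LipschitzOnWith K f s


lemma lipOn_mul' {α : Type*} [PseudoMetricSpace α] {f g : α → ℝ} {s : Set α}
    {Kf Kg : NNReal} {Mf Mg : ℝ} (hf : LipschitzOnWith Kf f s) (hg : LipschitzOnWith Kg g s)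
    (hMf : ∀ x ∈ s, |f x| ≤ Mf) (hMg : ∀ x ∈ s, |g x| ≤ Mg) :
    ∀ x ∈ s, ∀ y ∈ s, dist (f x * g x) (f y * g y) ≤ (Mf * Kg + Mg * Kf) * dist x y := by
  intro x hx y hy
  have h1 : dist (f x * g x) (f y * g y) ≤ |f x| * dist (g x) (g y) + |g y| * dist (f x) (f y) := by
    have : f x * g x - f y * g y = f x * (g x - g y) + g y * (f x - f y) := by ring
    simp only [Real.dist_eq, this]
    calc |f x * (g x - g y) + g y * (f x - f y)|
        ≤ |f x * (g x - g y)| + |g y * (f x - f y)| := abs_add_le _ _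
      _ = |f x| * |g x - g y| + |g y| * |f x - f y| := by rw [abs_mul, abs_mul]
  refine h1.trans ?_
  have h2 := hg.dist_le_mul x hx y hy
  have h3 := hf.dist_le_mul x hx y hy
  have hMf0 : 0 ≤ Mf := (abs_nonneg _).trans (hMf x hx)
  have hMg0 : 0 ≤ Mg := (abs_nonneg _).trans (hMg y hy)
  calc |f x| * dist (g x) (g y) + |g y| * dist (f x) (f y)
      ≤ Mf * (Kg * dist x y) + Mg * (Kf * dist x y) := by
        refine add_le_add (mul_le_mul (hMf x hx) h2 dist_nonneg hMf0)
          (mul_le_mul (hMg y hy) h3 dist_nonneg hMg0)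
    _ = (Mf * Kg + Mg * Kf) * dist x y := by ring



/-- A locally Lipschitz function is Lipschitz on compact sets. -/
lemma locallyLipschitz_lipschitzOnWith {E : Type*} [NormedAddCommGroup E] [NormedSpace ℝ E]
    {f : E → ℝ} (hf : LocallyLipschitz f) {s : Set E} (hs : IsCompact s) :
    ∃ K : ℝ, 0 ≤ K ∧ ∀ x ∈ s, ∀ y ∈ s, dist (f x) (f y) ≤ K * dist x y := by
  choose K t ht hK using hf
  obtain ⟨M, hM⟩ := hs.exists_bound_of_continuousOn (LocallyLipschitz.continuous
    (fun x => ⟨K x, t x, ht x, hK x⟩)).continuousOn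
  obtain ⟨u, hus, hu⟩ := hs.elim_nhds_subcover (fun x => interior (t x))
    (fun x _ => isOpen_interior.mem_nhds (mem_interior_iff_mem_nhds.2 (ht x)))
  have hcov : s ⊆ ⋃ i : u, interior (t i) := by
    intro y hy
    obtain ⟨x, hxu, hx⟩ := Set.mem_iUnion₂.1 (hu hy)
    exact Set.mem_iUnion.2 ⟨⟨x, hxu⟩, hx⟩
  obtain ⟨δ, hδ, hball⟩ := lebesgue_number_lemma_of_metric hs (fun _ => isOpen_interior) hcov
  set Kmax : ℝ := ∑ x ∈ u, (K x : ℝ) with hKmax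
  have hKmax0 : 0 ≤ Kmax := Finset.sum_nonneg fun x _ => (K x).coe_nonneg
  set M' : ℝ := max M 0 with hM'
  refine ⟨max Kmax (2 * M' / δ), le_max_of_le_left hKmax0, fun x hx y hy => ?_⟩
  rcases lt_or_ge (dist x y) δ with hlt | hge
  · obtain ⟨i, hi⟩ := hball x hx
    have hxt : x ∈ t i := interior_subset (hi (Metric.mem_ball_self hδ))
    have hyt : y ∈ t i := interior_subset (hi (by simpa [Metric.mem_ball, dist_comm] using hlt))
    have := (hK i).dist_le_mul x hxt y hyt
    refine this.trans ?_
    have hKi : (K (i : E) : ℝ) ≤ Kmax :=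
      Finset.single_le_sum (fun x _ => (K x).coe_nonneg) i.2
    exact mul_le_mul (hKi.trans (le_max_left _ _)) le_rfl dist_nonneg
      (le_trans hKmax0 (le_max_left _ _))
  · have h1 : dist (f x) (f y) ≤ 2 * M' := by
      calc dist (f x) (f y) ≤ ‖f x‖ + ‖f y‖ := dist_le_norm_add_norm _ _
        _ ≤ M' + M' := add_le_add ((hM x hx).trans (le_max_left _ _))
            ((hM y hy).trans (le_max_left _ _))
        _ = 2 * M' := by ring
    have h2 : 2 * M' ≤ 2 * M' / δ * dist x y := by
      rw [div_mul_eq_mul_div, le_div_iff₀ hδ]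
      have : 0 ≤ 2 * M' := by positivity
      calc 2 * M' * δ ≤ 2 * M' * dist x y := by
            exact mul_le_mul_of_nonneg_left hge this
        _ = 2 * M' * dist x y := rfl
    exact h1.trans (h2.trans (mul_le_mul_of_nonneg_right (le_max_right _ _) dist_nonneg))

/-- A locally Lipschitz function with compact support is Lipschitz. -/
lemma locallyLipschitz_lipschitzWith {E : Type*} [NormedAddCommGroup E] [NormedSpace ℝ E]
    [ProperSpace E] {f : E → ℝ} (hf : LocallyLipschitz f) (hsupp : HasCompactSupport f) :
    ∃ K : NNReal, LipschitzWith K f := by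
  set T := tsupport f with hT
  have hTc : IsCompact (Metric.cthickening 1 T) := hsupp.cthickening
  obtain ⟨K, hK0, hK⟩ := locallyLipschitz_lipschitzOnWith hf hTc
  obtain ⟨M0, hM⟩ := hTc.exists_bound_of_continuousOn hf.continuous.continuousOn
  set M : ℝ := max M0 0 with hMdef
  have hM : ∀ x ∈ Metric.cthickening 1 T, ‖f x‖ ≤ M :=
    fun x hx => (hM x hx).trans (le_max_left _ _)
  have hM0 : 0 ≤ M := le_max_right _ _
  refine ⟨(max K (2*M)).toNNReal, LipschitzWith.of_dist_le' ?_⟩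
  intro x y
  rcases le_or_gt (dist x y) 1 with hle | hgt
  · -- both in cthickening if either relevant; cases on membership
    by_cases hx : x ∈ Metric.cthickening 1 T
    · by_cases hy : y ∈ Metric.cthickening 1 T
      · exact (hK x hx y hy).trans (mul_le_mul_of_nonneg_right (le_max_left _ _) dist_nonneg)
      · -- y far from T; then x,y both outside T? f y = 0 and also f x = 0? not nec.
        have hxT : x ∉ T := fun hxT => hy (Metric.mem_cthickening_of_dist_le y x 1 T hxT
          (by rwa [dist_comm]))
        have hyT : y ∉ T := fun hyT => hy (Metric.self_subset_cthickening T hyT)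
        have : f x = 0 := image_eq_zero_of_notMem_tsupport hxT
        have : f y = 0 := image_eq_zero_of_notMem_tsupport hyT
        simp_all [Real.dist_eq]
        positivity
    · have hxT : x ∉ T := fun hxT => hx (Metric.self_subset_cthickening T hxT)
      by_cases hy : y ∈ Metric.cthickening 1 T
      · have hyT : y ∉ T := fun hyT => hx (Metric.mem_cthickening_of_dist_le x y 1 T hyT hle)
        have : f x = 0 := image_eq_zero_of_notMem_tsupport hxT
        have : f y = 0 := image_eq_zero_of_notMem_tsupport hyT
        simp_all [Real.dist_eq]
        positivity
      · have hyT : y ∉ T := fun hyT => hy (Metric.self_subset_cthickening T hyT)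
        have hfx : f x = 0 := image_eq_zero_of_notMem_tsupport hxT
        have hfy : f y = 0 := image_eq_zero_of_notMem_tsupport hyT
        simp only [hfx, hfy, dist_self]
        positivity
  · -- dist > 1 : use bound 2M
    have h1 : dist (f x) (f y) ≤ 2 * M := by
      by_cases hx : x ∈ Metric.cthickening 1 T
      · by_cases hy : y ∈ Metric.cthickening 1 T
        · calc dist (f x) (f y) ≤ ‖f x‖ + ‖f y‖ := dist_le_norm_add_norm _ _
            _ ≤ M + M := add_le_add (hM x hx) (hM y hy)
            _ = 2 * M := by ring
        · have hyT : y ∉ T := fun hyT => hy (Metric.self_subset_cthickening T hyT)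
          have hfy : f y = 0 := image_eq_zero_of_notMem_tsupport hyT
          rw [Real.dist_eq, hfy, sub_zero]
          calc |f x| ≤ M := hM x hx
            _ ≤ 2 * M := by linarith
      · have hxT : x ∉ T := fun hxT => hx (Metric.self_subset_cthickening T hxT)
        have hfx : f x = 0 := image_eq_zero_of_notMem_tsupport hxT
        rw [dist_comm, Real.dist_eq, hfx, sub_zero]
        by_cases hy : y ∈ Metric.cthickening 1 T
        · calc |f y| ≤ M := hM y hy
            _ ≤ 2 * M := by linarith
        · have hyT : y ∉ T := fun hyT => hy (Metric.self_subset_cthickening T hyT)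
          have hfy : f y = 0 := image_eq_zero_of_notMem_tsupport hyT
          rw [hfy]; simpa using by positivity
    refine h1.trans ?_
    have h2 : (2*M) * 1 ≤ (2*M) * dist x y := mul_le_mul_of_nonneg_left hgt.le (by positivity)
    rw [mul_one] at h2
    exact h2.trans (mul_le_mul_of_nonneg_right (le_max_right _ _) dist_nonneg)

lemma aediff_of_locLip {n : ℕ} {Ω : Set (Fin n → ℝ)} (hΩ : IsOpen Ω)
    {w : (Fin n → ℝ) → ℝ} (hw : LocLipschitzOn Ω w) :
    ∀ᵐ x ∂(volume.restrict Ω), DifferentiableAt ℝ w x := by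
  rw [ae_restrict_iff' hΩ.measurableSet]
  rw [ae_iff]
  have : {x | ¬ (x ∈ Ω → DifferentiableAt ℝ w x)} = {x | x ∈ Ω ∧ ¬ DifferentiableAt ℝ w x} := by
    ext x; simp [Classical.not_imp]
  rw [this]
  set D := {x | x ∈ Ω ∧ ¬ DifferentiableAt ℝ w x} with hD
  refine measure_null_of_locally_null D fun x hx => ?_
  obtain ⟨hxΩ, hxd⟩ := hx
  obtain ⟨K, s, hs, hK⟩ := hw x hxΩ
  have hsx : s ∈ nhds x := by
    rwa [nhdsWithin_eq_nhds.2 (hΩ.mem_nhds hxΩ)] at hs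
  obtain ⟨ε, hε, hball⟩ := Metric.mem_nhds_iff.1 hsx
  have hKball : LipschitzOnWith K w (Metric.ball x ε) := hK.mono hball
  obtain ⟨g, hg, heq⟩ := hKball.extend_real
  refine ⟨D ∩ Metric.ball x ε, inter_mem_nhdsWithin _ (Metric.ball_mem_nhds x hε), ?_⟩
  have hnull : volume {y | ¬ DifferentiableAt ℝ g y} = 0 := by
    have := hg.ae_differentiableAt (μ := (volume : Measure (Fin n → ℝ)))
    rwa [ae_iff] at this
  refine measure_mono_null (fun y hy => ?_) hnull
  obtain ⟨⟨_, hyd⟩, hyb⟩ := hy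
  intro hgd
  exact hyd (hgd.congr_of_eventuallyEq
    (Filter.eventuallyEq_of_mem (Metric.isOpen_ball.mem_nhds hyb) heq))

lemma rpow_add_le {a b q : ℝ} (ha : 0 ≤ a) (hb : 0 ≤ b) (hq : 0 ≤ q) :
    (a + b) ^ q ≤ 2 ^ q * (a ^ q + b ^ q) := by
  have h1 : a + b ≤ 2 * max a b := by
    rcases le_total a b with h | h
    · calc a + b ≤ b + b := by linarith
        _ = 2 * b := by ring
        _ ≤ 2 * max a b := by simp [h]
    · calc a + b ≤ a + a := by linarith
        _ = 2 * a := by ring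
        _ ≤ 2 * max a b := by simp [h]
  calc (a + b) ^ q ≤ (2 * max a b) ^ q :=
        Real.rpow_le_rpow (by positivity) h1 hq
    _ = 2 ^ q * (max a b) ^ q := Real.mul_rpow (by norm_num) (le_max_of_le_left ha)
    _ ≤ 2 ^ q * (a ^ q + b ^ q) := by
        apply mul_le_mul_of_nonneg_left _ (by positivity)
        rcases le_total a b with h | h
        · rw [max_eq_right h]
          nlinarith [Real.rpow_nonneg ha q]
        · rw [max_eq_left h]
          nlinarith [Real.rpow_nonneg hb q]

lemma sqQnormGrad_measurable {n : ℕ} {Q : (Fin n → ℝ) → Matrix (Fin n) (Fin n) ℝ}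
    (hQmeas : ∀ i j : Fin n, Measurable fun x => Q x i j) (f : (Fin n → ℝ) → ℝ) :
    Measurable (sqQnormGrad Q f) := by
  have hg : ∀ i, Measurable (fun x => grad f x i) := fun i => by
    unfold grad
    exact measurable_fderiv_apply_const ℝ f (Pi.single i 1)
  have : Measurable fun x => (Q x).mulVec (grad f x) ⬝ᵥ grad f x := by
    unfold Matrix.mulVec dotProduct
    simp only
    apply Finset.measurable_sum
    intro i _
    apply Measurable.mul _ (hg i)
    apply Finset.measurable_sum
    intro j _
    exact (hQmeas i j).mul (hg j)
  exact Measurable.comp Real.continuous_sqrt.measurable this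

noncomputable def qnormE {n : ℕ} (Q : Matrix (Fin n) (Fin n) ℝ) (u : Fin n → ℝ) : ℝ :=
  Real.sqrt (Q.mulVec u ⬝ᵥ u)

lemma sqQnormGrad_nonneg {n : ℕ} (Q : (Fin n → ℝ) → Matrix (Fin n) (Fin n) ℝ)
    (f : (Fin n → ℝ) → ℝ) (x : Fin n → ℝ) : 0 ≤ sqQnormGrad Q f x :=
  Real.sqrt_nonneg _

lemma sqQnormGrad_eq_qnormE {n : ℕ} (Q : (Fin n → ℝ) → Matrix (Fin n) (Fin n) ℝ)
    (f : (Fin n → ℝ) → ℝ) (x : Fin n → ℝ) :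
    sqQnormGrad Q f x = qnormE (Q x) (grad f x) := rfl

lemma grad_mul {n : ℕ} {η w : (Fin n → ℝ) → ℝ} {x : Fin n → ℝ}
    (hη : DifferentiableAt ℝ η x) (hw : DifferentiableAt ℝ w x) :
    grad (fun y => η y * w y) x = η x • grad w x + w x • grad η x := by
  funext i
  unfold grad
  rw [fderiv_fun_mul hη hw]
  simp [ContinuousLinearMap.add_apply, ContinuousLinearMap.smul_apply, smul_eq_mul]

lemma locLip_continuousOn {n : ℕ} {Ω : Set (Fin n → ℝ)} {w : (Fin n → ℝ) → ℝ}
    (hw : LocLipschitzOn Ω w) : ContinuousOn w Ω := by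
  intro x hx
  obtain ⟨K, s, hs, hK⟩ := hw x hx
  have hxs : x ∈ s := by
    obtain ⟨u, hu, huΩ, hsub⟩ := mem_nhdsWithin.1 hs
    exact hsub ⟨mem_of_mem_nhds (hu.mem_nhds huΩ), hx⟩
  exact (hK.continuousOn x hxs).mono_left (nhdsWithin_le_of_mem hs)

open scoped MatrixOrder in
lemma qnormE_eq {n : ℕ} {Q : Matrix (Fin n) (Fin n) ℝ} (hQ : Q.PosSemidef) (u : Fin n → ℝ) :
    qnormE Q u = ‖(EuclideanSpace.equiv (Fin n) ℝ).symm ((CFC.sqrt Q).mulVec u)‖ := by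
  rw [EuclideanSpace.norm_eq]
  unfold qnormE
  congr 1
  have hsym : (CFC.sqrt Q)ᵀ = CFC.sqrt Q := by
    simpa [Matrix.IsHermitian] using (CFC.sqrt_nonneg Q).posSemidef.1
  have key : Q.mulVec u ⬝ᵥ u = ((CFC.sqrt Q).mulVec u) ⬝ᵥ ((CFC.sqrt Q).mulVec u) := by
    rw [Matrix.dotProduct_mulVec, ← Matrix.mulVec_transpose, hsym,
      Matrix.mulVec_mulVec, CFC.sqrt_mul_sqrt_self Q hQ.nonneg]
  rw [key]
  simp [dotProduct, EuclideanSpace.equiv, Real.norm_eq_abs, sq_abs, pow_two]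

lemma qnormE_add {n : ℕ} {Q : Matrix (Fin n) (Fin n) ℝ} (hQ : Q.PosSemidef) (u v : Fin n → ℝ) :
    qnormE Q (u + v) ≤ qnormE Q u + qnormE Q v := by
  rw [qnormE_eq hQ, qnormE_eq hQ, qnormE_eq hQ, Matrix.mulVec_add, map_add]
  exact norm_add_le _ _

lemma qnormE_smul {n : ℕ} {Q : Matrix (Fin n) (Fin n) ℝ} (hQ : Q.PosSemidef) (c : ℝ)
    (u : Fin n → ℝ) : qnormE Q (c • u) = |c| * qnormE Q u := by
  rw [qnormE_eq hQ, qnormE_eq hQ, Matrix.mulVec_smul, _root_.map_smul, norm_smul, Real.norm_eq_abs]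

lemma qnormE_nonneg {n : ℕ} (Q : Matrix (Fin n) (Fin n) ℝ) (u : Fin n → ℝ) : 0 ≤ qnormE Q u :=
  Real.sqrt_nonneg _


/-- Under a Sobolev inequality for compactly supported Lipschitz functions
on `B` (i), the existence of a cutoff `η` equal to `1` on `S ⊆ B` with
`√Q ∇η ∈ L^{pt}(B)` (ii), and the embedding `(∫_B |f|^{pt'})^{1/(pt')} ≤ c₂‖f‖_{W^{1,p}_Q(Ω)}`
for locally Lipschitz `f` (iii), every locally Lipschitz `w` satisfies
`(∫_S |w|^{pσ})^{1/(pσ)} ≤ C‖w‖_{W^{1,p}_Q(Ω)}` with `C` independent of `w`. -/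
theorem stmt15 {n : ℕ} (Ω : Set (Fin n → ℝ)) (hΩ : IsOpen Ω)
    (p σ : ℝ) (hp : 1 < p) (hσ : 1 < σ)
    (Q : (Fin n → ℝ) → Matrix (Fin n) (Fin n) ℝ)
    (hQmeas : ∀ i j : Fin n, Measurable fun x => Q x i j)
    (hQpsd : ∀ᵐ x ∂(volume.restrict Ω), (Q x).PosSemidef)
    (B S : Set (Fin n → ℝ)) (hBmeas : MeasurableSet B) (hBbdd : Bornology.IsBounded B)
    (hBΩ : B ⊆ Ω) (hBpos : 0 < volume B) (hSB : S ⊆ B)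
    (r : ℝ) (hr : 0 < r) (C₁ : ℝ) (hC₁ : 0 < C₁)
    (sobolev : ∀ v : (Fin n → ℝ) → ℝ, (∃ K : NNReal, LipschitzWith K v) →
      tsupport v ⊆ B →
      ((volume B)⁻¹ * ∫⁻ x in B, ENNReal.ofReal (|v x| ^ (p * σ))) ^ (1 / (p * σ)) ≤
        ENNReal.ofReal C₁ *
          (ENNReal.ofReal r *
              ((volume B)⁻¹ * ∫⁻ x in B, ENNReal.ofReal (sqQnormGrad Q v x ^ p)) ^ (1 / p) +
            ((volume B)⁻¹ * ∫⁻ x in B, ENNReal.ofReal (|v x| ^ p)) ^ (1 / p)))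
    (t : ℝ) (ht : 1 < t)
    (η : (Fin n → ℝ) → ℝ) (hηlip : ∃ K : NNReal, LipschitzWith K η)
    (hηsupp : tsupport η ⊆ B)
    (hη01 : ∀ x, 0 ≤ η x ∧ η x ≤ 1) (hηS : ∀ x ∈ S, η x = 1)
    (hηint : ∫⁻ x in B, ENNReal.ofReal (sqQnormGrad Q η x ^ (p * t)) < ⊤)
    (t' : ℝ) (ht' : t' = t / (t - 1)) (c₂ : ℝ) (hc₂ : 0 < c₂)
    (embed : ∀ f : (Fin n → ℝ) → ℝ, LocLipschitzOn Ω f →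
      (∫⁻ x in B, ENNReal.ofReal (|f x| ^ (p * t'))) ^ (1 / (p * t')) ≤
        ENNReal.ofReal c₂ *
          ((∫⁻ x in Ω, ENNReal.ofReal (sqQnormGrad Q f x ^ p)) +
            ∫⁻ x in Ω, ENNReal.ofReal (|f x| ^ p)) ^ (1 / p)) :
    ∃ C : ℝ, 0 < C ∧ ∀ w : (Fin n → ℝ) → ℝ, LocLipschitzOn Ω w →
      (∫⁻ x in S, ENNReal.ofReal (|w x| ^ (p * σ))) ^ (1 / (p * σ)) ≤
        ENNReal.ofReal C *
          ((∫⁻ x in Ω, ENNReal.ofReal (sqQnormGrad Q w x ^ p)) +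
            ∫⁻ x in Ω, ENNReal.ofReal (|w x| ^ p)) ^ (1 / p) := by

  -- basic positivity facts
  have hp0 : (0:ℝ) < p := lt_trans one_pos hp
  have hσ0 : (0:ℝ) < σ := lt_trans one_pos hσ
  have ht0 : (0:ℝ) < t := lt_trans one_pos ht
  have ht'1 : 1 < t' := by
    rw [ht']
    rw [lt_div_iff₀ (by linarith)]
    linarith
  have ht'0 : (0:ℝ) < t' := lt_trans one_pos ht'1
  have hconj : t'.HolderConjugate t := by
    have h := Real.HolderConjugate.conjExponent ht
    rw [Real.conjExponent] at h
    rw [ht']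
    exact h.symm
  -- measure of B
  have hBfin : volume B < ⊤ := hBbdd.measure_lt_top
  have hBne : volume B ≠ ⊤ := hBfin.ne
  have hBne0 : volume B ≠ 0 := hBpos.ne'
  -- the cutoff constant
  set Iη : ℝ≥0∞ := ∫⁻ x in B, ENNReal.ofReal (sqQnormGrad Q η x ^ (p * t)) with hIη
  set A : ℝ≥0∞ := ENNReal.ofReal (2 ^ p) *
      (1 + ENNReal.ofReal c₂ ^ p * Iη ^ (1 / t)) with hA
  have hAne : A ≠ ⊤ := by
    apply ENNReal.mul_ne_top ENNReal.ofReal_ne_top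
    apply ENNReal.add_ne_top.2
    refine ⟨ENNReal.one_ne_top, ENNReal.mul_ne_top ?_ ?_⟩
    · exact ENNReal.rpow_ne_top_of_nonneg hp0.le ENNReal.ofReal_ne_top
    · exact ENNReal.rpow_ne_top_of_nonneg (by positivity) hηint.ne
  set C' : ℝ≥0∞ := (volume B) ^ (1 / (p * σ)) * (ENNReal.ofReal C₁ *
      (ENNReal.ofReal r * ((volume B)⁻¹ * A) ^ (1 / p) + ((volume B)⁻¹) ^ (1 / p))) with hC'
  have hC'ne : C' ≠ ⊤ := by
    apply ENNReal.mul_ne_top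
    · exact ENNReal.rpow_ne_top_of_nonneg (by positivity) hBne
    apply ENNReal.mul_ne_top ENNReal.ofReal_ne_top
    apply ENNReal.add_ne_top.2
    constructor
    · apply ENNReal.mul_ne_top ENNReal.ofReal_ne_top
      apply ENNReal.rpow_ne_top_of_nonneg (by positivity)
      exact ENNReal.mul_ne_top (ENNReal.inv_ne_top.2 hBne0) hAne
    · exact ENNReal.rpow_ne_top_of_nonneg (by positivity) (ENNReal.inv_ne_top.2 hBne0)
  refine ⟨C'.toReal + 1, by positivity, fun w hw => ?_⟩
  have hC'le : C' ≤ ENNReal.ofReal (C'.toReal + 1) := by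
    nth_rewrite 1 [← ENNReal.ofReal_toReal hC'ne]
    exact ENNReal.ofReal_le_ofReal (by linarith)
  set Gw : ℝ≥0∞ := ∫⁻ x in Ω, ENNReal.ofReal (sqQnormGrad Q w x ^ p) with hGw
  set Ww : ℝ≥0∞ := ∫⁻ x in Ω, ENNReal.ofReal (|w x| ^ p) with hWw
  set X : ℝ≥0∞ := Gw + Ww with hX
  -- the cutoff product
  set v : (Fin n → ℝ) → ℝ := fun y => η y * w y with hv
  obtain ⟨Kη, hKη⟩ := hηlip
  -- v is locally Lipschitz
  have hvloc : LocallyLipschitz v := by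
    intro x
    by_cases hx : x ∈ Ω
    · obtain ⟨K, s, hs, hK⟩ := hw x hx
      have hsx : s ∈ nhds x := by rwa [nhdsWithin_eq_nhds.2 (hΩ.mem_nhds hx)] at hs
      obtain ⟨ε, hε, hball⟩ := Metric.mem_nhds_iff.1 hsx
      have hcb : Metric.closedBall x (ε/2) ⊆ s :=
        subset_trans (Metric.closedBall_subset_ball (by linarith)) hball
      have hKcb : LipschitzOnWith K w (Metric.closedBall x (ε/2)) := hK.mono hcb
      have hxcb : x ∈ Metric.closedBall x (ε/2) := Metric.mem_closedBall_self (by positivity)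
      have hMw : ∀ y ∈ Metric.closedBall x (ε/2), |w y| ≤ |w x| + K * (ε/2) := by
        intro y hy
        have h1 := hKcb.dist_le_mul y hy x hxcb
        rw [Real.dist_eq] at h1
        have hd : dist y x ≤ ε/2 := Metric.mem_closedBall.1 hy
        calc |w y| = |(w y - w x) + w x| := by ring_nf
          _ ≤ |w y - w x| + |w x| := abs_add_le _ _
          _ ≤ K * dist y x + |w x| := by
              exact add_le_add_left h1 _
          _ ≤ K * (ε/2) + |w x| := by
              exact add_le_add_left (mul_le_mul_of_nonneg_left hd K.coe_nonneg) _
          _ = |w x| + K * (ε/2) := by ring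
      have hMη : ∀ y ∈ Metric.closedBall x (ε/2), |η y| ≤ 1 := by
        intro y _
        rcases hη01 y with ⟨h0, h1⟩
        rw [abs_of_nonneg h0]; exact h1
      have hd := lipOn_mul' (hKη.lipschitzOnWith (s := Metric.closedBall x (ε/2))) hKcb hMη hMw
      refine ⟨(1 * (K:ℝ) + (|w x| + K * (ε/2)) * Kη).toNNReal,
        Metric.closedBall x (ε/2), Metric.closedBall_mem_nhds x (by positivity), ?_⟩
      exact LipschitzOnWith.of_dist_le' fun y hy z hz => hd y hy z hz
    · have hxη : x ∉ tsupport η := fun hc => hx (hBΩ (hηsupp hc))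
      refine ⟨(0:ℝ).toNNReal, (tsupport η)ᶜ, (isClosed_tsupport η).isOpen_compl.mem_nhds hxη, ?_⟩
      refine LipschitzOnWith.of_dist_le' (K := 0) fun y hy z hz => ?_
      have h1 : v y = 0 := by simp [hv, image_eq_zero_of_notMem_tsupport hy]
      have h2 : v z = 0 := by simp [hv, image_eq_zero_of_notMem_tsupport hz]
      simp [h1, h2]
  -- v has compact support
  have hvcs : HasCompactSupport v := by
    have h1 : Function.support v ⊆ tsupport η := fun y hy => by
      by_contra hny
      exact hy (by simp [hv, image_eq_zero_of_notMem_tsupport hny])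
    have h2 : IsCompact (tsupport η) :=
      Metric.isCompact_of_isClosed_isBounded (isClosed_tsupport η) (hBbdd.subset hηsupp)
    exact HasCompactSupport.of_support_subset_isCompact h2 h1
  have hvlip : ∃ K : NNReal, LipschitzWith K v := locallyLipschitz_lipschitzWith hvloc hvcs
  have hvsupp : tsupport v ⊆ B := by
    refine subset_trans ?_ hηsupp
    apply closure_minimal _ (isClosed_tsupport η)
    exact fun y hy => by
      by_contra hny
      exact hy (by simp [hv, image_eq_zero_of_notMem_tsupport hny])
  -- η = 1 on B ∩ closure S
  have hη1 : ∀ x ∈ B ∩ closure S, η x = 1 := by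
    intro x hx
    have hcl : closure S ⊆ {y | η y = 1} := by
      apply closure_minimal (fun y hy => hηS y hy)
      exact isClosed_eq hKη.continuous continuous_const
    exact hcl hx.2
  have hS'meas : MeasurableSet (B ∩ closure S) := hBmeas.inter isClosed_closure.measurableSet
  -- Step 1
  have step1 : (∫⁻ x in S, ENNReal.ofReal (|w x| ^ (p * σ))) ≤
      ∫⁻ x in B, ENNReal.ofReal (|v x| ^ (p * σ)) := by
    calc (∫⁻ x in S, ENNReal.ofReal (|w x| ^ (p * σ)))
        ≤ ∫⁻ x in B ∩ closure S, ENNReal.ofReal (|w x| ^ (p * σ)) :=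
          lintegral_mono' (Measure.restrict_mono
            (subset_inter hSB subset_closure) le_rfl) le_rfl
      _ = ∫⁻ x in B ∩ closure S, ENNReal.ofReal (|v x| ^ (p * σ)) := by
          apply setLIntegral_congr_fun hS'meas
          intro x hx
          rw [hv]
          simp only
          rw [hη1 x hx, one_mul]
      _ ≤ ∫⁻ x in B, ENNReal.ofReal (|v x| ^ (p * σ)) :=
          lintegral_mono' (Measure.restrict_mono inter_subset_left le_rfl) le_rfl
  -- Step 6 : |v| ≤ |w| pointwise
  have hvw : ∀ x, |v x| ≤ |w x| := by
    intro x
    rw [hv, abs_mul]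
    rcases hη01 x with ⟨h0, h1⟩
    calc |η x| * |w x| ≤ 1 * |w x| := by
          apply mul_le_mul_of_nonneg_right _ (abs_nonneg _)
          rw [abs_of_nonneg h0]; exact h1
      _ = |w x| := one_mul _
  -- measurability facts
  have hwae : AEMeasurable w (volume.restrict Ω) :=
    ContinuousOn.aemeasurable (locLip_continuousOn hw) hΩ.measurableSet
  have hwaeB : AEMeasurable w (volume.restrict B) :=
    hwae.mono_measure (Measure.restrict_mono hBΩ le_rfl)
  have hNw : Measurable (sqQnormGrad Q w) := sqQnormGrad_measurable hQmeas w
  have hNη : Measurable (sqQnormGrad Q η) := sqQnormGrad_measurable hQmeas η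
  have hNv : Measurable (sqQnormGrad Q v) := sqQnormGrad_measurable hQmeas v
  -- Step 2 : a.e. pointwise gradient bound on B
  have step2 : ∀ᵐ x ∂(volume.restrict B),
      ENNReal.ofReal (sqQnormGrad Q v x ^ p) ≤ ENNReal.ofReal (2 ^ p) *
        (ENNReal.ofReal (sqQnormGrad Q w x ^ p) +
         ENNReal.ofReal (|w x| ^ p * sqQnormGrad Q η x ^ p)) := by
    have haeQ : ∀ᵐ x ∂(volume.restrict B), (Q x).PosSemidef :=
      ae_mono (Measure.restrict_mono hBΩ le_rfl) hQpsd
    have haew : ∀ᵐ x ∂(volume.restrict B), DifferentiableAt ℝ w x :=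
      ae_mono (Measure.restrict_mono hBΩ le_rfl) (aediff_of_locLip hΩ hw)
    have haeη : ∀ᵐ x ∂(volume.restrict B), DifferentiableAt ℝ η x :=
      ae_restrict_of_ae hKη.ae_differentiableAt
    filter_upwards [haeQ, haew, haeη] with x hQx hwx hηx
    have hgrad : grad v x = η x • grad w x + w x • grad η x := by
      rw [hv]; exact grad_mul hηx hwx
    have hNvb : sqQnormGrad Q v x ≤ sqQnormGrad Q w x + |w x| * sqQnormGrad Q η x := by
      rw [sqQnormGrad_eq_qnormE, hgrad, sqQnormGrad_eq_qnormE, sqQnormGrad_eq_qnormE]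
      refine le_trans (qnormE_add hQx _ _) ?_
      rw [qnormE_smul hQx, qnormE_smul hQx]
      apply add_le_add _ le_rfl
      rcases hη01 x with ⟨h0, h1⟩
      calc |η x| * qnormE (Q x) (grad w x) ≤ 1 * qnormE (Q x) (grad w x) := by
            apply mul_le_mul_of_nonneg_right _ (qnormE_nonneg _ _)
            rw [abs_of_nonneg h0]; exact h1
        _ = qnormE (Q x) (grad w x) := one_mul _
    have hreal : sqQnormGrad Q v x ^ p ≤
        2 ^ p * (sqQnormGrad Q w x ^ p + (|w x| * sqQnormGrad Q η x) ^ p) := by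
      calc sqQnormGrad Q v x ^ p
          ≤ (sqQnormGrad Q w x + |w x| * sqQnormGrad Q η x) ^ p :=
            Real.rpow_le_rpow (sqQnormGrad_nonneg Q v _) hNvb hp0.le
        _ ≤ 2 ^ p * (sqQnormGrad Q w x ^ p + (|w x| * sqQnormGrad Q η x) ^ p) :=
            rpow_add_le (sqQnormGrad_nonneg Q w _)
              (mul_nonneg (abs_nonneg _) (sqQnormGrad_nonneg Q η _)) hp0.le
    calc ENNReal.ofReal (sqQnormGrad Q v x ^ p)
        ≤ ENNReal.ofReal (2 ^ p *
            (sqQnormGrad Q w x ^ p + (|w x| * sqQnormGrad Q η x) ^ p)) :=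
          ENNReal.ofReal_le_ofReal hreal
      _ = ENNReal.ofReal (2 ^ p) *
            (ENNReal.ofReal (sqQnormGrad Q w x ^ p) +
             ENNReal.ofReal (|w x| ^ p * sqQnormGrad Q η x ^ p)) := by
          rw [ENNReal.ofReal_mul (by positivity),
            ENNReal.ofReal_add (Real.rpow_nonneg (sqQnormGrad_nonneg Q w _) p)
              (Real.rpow_nonneg (mul_nonneg (abs_nonneg _) (sqQnormGrad_nonneg Q η _)) p),
            Real.mul_rpow (abs_nonneg _) (sqQnormGrad_nonneg Q η _)]
  -- Step 4
  have step4 : (∫⁻ x in B, ENNReal.ofReal (|w x| ^ (p * t'))) ^ (1 / t') ≤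
      ENNReal.ofReal c₂ ^ p * X := by
    have h := embed w hw
    rw [← hGw, ← hWw, ← hX] at h
    have hYp : (∫⁻ x in B, ENNReal.ofReal (|w x| ^ (p * t'))) ^ (1 / t') =
        ((∫⁻ x in B, ENNReal.ofReal (|w x| ^ (p * t'))) ^ (1 / (p * t'))) ^ p := by
      rw [← ENNReal.rpow_mul]
      congr 1
      field_simp
    rw [hYp]
    calc ((∫⁻ x in B, ENNReal.ofReal (|w x| ^ (p * t'))) ^ (1 / (p * t'))) ^ p
        ≤ (ENNReal.ofReal c₂ * X ^ (1 / p)) ^ p := ENNReal.rpow_le_rpow h hp0.le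
      _ = ENNReal.ofReal c₂ ^ p * X := by
          rw [ENNReal.mul_rpow_of_nonneg _ _ hp0.le, ← ENNReal.rpow_mul,
            one_div, inv_mul_cancel₀ hp0.ne', ENNReal.rpow_one]
  -- Step 3
  have step3 : (∫⁻ x in B, ENNReal.ofReal (|w x| ^ p * sqQnormGrad Q η x ^ p)) ≤
      (∫⁻ x in B, ENNReal.ofReal (|w x| ^ (p * t'))) ^ (1 / t') * Iη ^ (1 / t) := by
    have hfm : AEMeasurable (fun x => ENNReal.ofReal (|w x| ^ p)) (volume.restrict B) := by
      have hφ : Measurable (fun y : ℝ => ENNReal.ofReal (|y| ^ p)) :=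
        ENNReal.measurable_ofReal.comp (measurable_abs.pow_const p)
      exact hφ.comp_aemeasurable hwaeB
    have hgm : AEMeasurable (fun x => ENNReal.ofReal (sqQnormGrad Q η x ^ p))
        (volume.restrict B) :=
      (ENNReal.measurable_ofReal.comp (hNη.pow_const p)).aemeasurable
    have H := ENNReal.lintegral_mul_le_Lp_mul_Lq (volume.restrict B) hconj hfm hgm
    have hl : (∫⁻ x in B, ENNReal.ofReal (|w x| ^ p * sqQnormGrad Q η x ^ p)) =
        ∫⁻ x in B, (fun x => ENNReal.ofReal (|w x| ^ p)) x *
          (fun x => ENNReal.ofReal (sqQnormGrad Q η x ^ p)) x := by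
      apply lintegral_congr
      intro x
      simp only
      rw [← ENNReal.ofReal_mul (by positivity)]
    have hr1 : (∫⁻ x in B, ENNReal.ofReal (|w x| ^ p) ^ t') =
        ∫⁻ x in B, ENNReal.ofReal (|w x| ^ (p * t')) := by
      apply lintegral_congr
      intro x
      rw [ENNReal.ofReal_rpow_of_nonneg (Real.rpow_nonneg (abs_nonneg _) p) ht'0.le,
        ← Real.rpow_mul (abs_nonneg _)]
    have hr2 : (∫⁻ x in B, ENNReal.ofReal (sqQnormGrad Q η x ^ p) ^ t) = Iη := by
      rw [hIη]
      apply lintegral_congr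
      intro x
      rw [ENNReal.ofReal_rpow_of_nonneg (Real.rpow_nonneg (sqQnormGrad_nonneg Q η _) p) ht0.le,
        ← Real.rpow_mul (sqQnormGrad_nonneg Q η _)]
    rw [hl]
    refine le_trans H ?_
    rw [hr1, hr2]
  -- Step 5 : gradient term bound
  have step5 : (∫⁻ x in B, ENNReal.ofReal (sqQnormGrad Q v x ^ p)) ≤ A * X := by
    calc (∫⁻ x in B, ENNReal.ofReal (sqQnormGrad Q v x ^ p))
        ≤ ∫⁻ x in B, ENNReal.ofReal (2 ^ p) *
            (ENNReal.ofReal (sqQnormGrad Q w x ^ p) +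
             ENNReal.ofReal (|w x| ^ p * sqQnormGrad Q η x ^ p)) := lintegral_mono_ae step2
      _ = ENNReal.ofReal (2 ^ p) *
            ((∫⁻ x in B, ENNReal.ofReal (sqQnormGrad Q w x ^ p)) +
             ∫⁻ x in B, ENNReal.ofReal (|w x| ^ p * sqQnormGrad Q η x ^ p)) := by
          rw [lintegral_const_mul' _ _ ENNReal.ofReal_ne_top, lintegral_add_left]
          exact (ENNReal.measurable_ofReal.comp (hNw.pow_const p))
      _ ≤ ENNReal.ofReal (2 ^ p) * (X + ENNReal.ofReal c₂ ^ p * Iη ^ (1 / t) * X) := by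
          apply mul_le_mul_of_nonneg_left _ zero_le
          apply add_le_add
          · calc (∫⁻ x in B, ENNReal.ofReal (sqQnormGrad Q w x ^ p))
                ≤ Gw := lintegral_mono' (Measure.restrict_mono hBΩ le_rfl) le_rfl
              _ ≤ X := le_self_add
          · calc (∫⁻ x in B, ENNReal.ofReal (|w x| ^ p * sqQnormGrad Q η x ^ p))
                ≤ (∫⁻ x in B, ENNReal.ofReal (|w x| ^ (p * t'))) ^ (1 / t') * Iη ^ (1 / t) :=
                  step3
              _ ≤ ENNReal.ofReal c₂ ^ p * X * Iη ^ (1 / t) :=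
                  mul_le_mul_left step4 _
              _ = ENNReal.ofReal c₂ ^ p * Iη ^ (1 / t) * X := by ring
      _ = A * X := by rw [hA]; ring
  have step6 : (∫⁻ x in B, ENNReal.ofReal (|v x| ^ p)) ≤ X := by
    calc (∫⁻ x in B, ENNReal.ofReal (|v x| ^ p))
        ≤ ∫⁻ x in B, ENNReal.ofReal (|w x| ^ p) := by
          apply lintegral_mono
          intro x
          exact ENNReal.ofReal_le_ofReal
            (Real.rpow_le_rpow (abs_nonneg _) (hvw x) hp0.le)
      _ ≤ Ww := lintegral_mono' (Measure.restrict_mono hBΩ le_rfl) le_rfl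
      _ ≤ X := le_add_self
  -- apply the Sobolev inequality to v
  have hsob := sobolev v hvlip hvsupp
  -- final computation
  have hrpσ : (0:ℝ) < 1 / (p * σ) := by positivity
  calc (∫⁻ x in S, ENNReal.ofReal (|w x| ^ (p * σ))) ^ (1 / (p * σ))
      ≤ (∫⁻ x in B, ENNReal.ofReal (|v x| ^ (p * σ))) ^ (1 / (p * σ)) :=
        ENNReal.rpow_le_rpow step1 hrpσ.le
    _ = ((volume B) * ((volume B)⁻¹ * ∫⁻ x in B, ENNReal.ofReal (|v x| ^ (p * σ)))) ^
          (1 / (p * σ)) := by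
        rw [← mul_assoc, ENNReal.mul_inv_cancel hBne0 hBne, one_mul]
    _ = (volume B) ^ (1 / (p * σ)) *
          ((volume B)⁻¹ * ∫⁻ x in B, ENNReal.ofReal (|v x| ^ (p * σ))) ^ (1 / (p * σ)) :=
        ENNReal.mul_rpow_of_nonneg _ _ hrpσ.le
    _ ≤ (volume B) ^ (1 / (p * σ)) * (ENNReal.ofReal C₁ *
          (ENNReal.ofReal r *
              ((volume B)⁻¹ * ∫⁻ x in B, ENNReal.ofReal (sqQnormGrad Q v x ^ p)) ^ (1 / p) +
            ((volume B)⁻¹ * ∫⁻ x in B, ENNReal.ofReal (|v x| ^ p)) ^ (1 / p))) :=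
        mul_le_mul_right hsob _
    _ ≤ (volume B) ^ (1 / (p * σ)) * (ENNReal.ofReal C₁ *
          (ENNReal.ofReal r * ((volume B)⁻¹ * (A * X)) ^ (1 / p) +
            ((volume B)⁻¹ * X) ^ (1 / p))) := by
        gcongr
    _ = C' * X ^ (1 / p) := by
        rw [hC']
        have e1 : ((volume B)⁻¹ * (A * X)) ^ (1 / p) =
            ((volume B)⁻¹ * A) ^ (1 / p) * X ^ (1 / p) := by
          rw [← mul_assoc, ENNReal.mul_rpow_of_nonneg _ _ (by positivity : (0:ℝ) ≤ 1/p)]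
        have e2 : ((volume B)⁻¹ * X) ^ (1 / p) =
            ((volume B)⁻¹) ^ (1 / p) * X ^ (1 / p) :=
          ENNReal.mul_rpow_of_nonneg _ _ (by positivity)
        rw [e1, e2]
        ring
    _ ≤ ENNReal.ofReal (C'.toReal + 1) * X ^ (1 / p) := mul_le_mul_left hC'le _
end
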